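/- Let (F,σ) be a constant-stable difference field with constant field K, and let (E,σ) with E = F[z₁]...[z_l] be an A-extension where σ(z_i) = a_i·z_i with a_i ∈ K* of order λ_i for each i. Then const(E,σ) = K if and only if each a_i is a primitive λ_i-th root of unity and gcd(λ_i, λ_j) = 1 for all i ≠ j. -/
import Mathlib

private lemma aux_dvd_of_pow_eq_one {F : Type*} [Monoid F] {a : F} {n : ℕ} (hn : 0 < n)
    (h1 : a ^ n = 1) (hmin : ∀ j : ℕ, 1 ≤ j → j < n → a ^ j ≠ 1) :
    ∀ m : ℕ, a ^ m = 1 → n ∣ m := by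
  intro m hm
  have hm' : a ^ (n * (m / n) + m % n) = 1 := by rw [Nat.div_add_mod]; exact hm
  rw [pow_add, pow_mul, h1, one_pow, one_mul] at hm'
  rcases Nat.eq_zero_or_pos (m % n) with h | h
  · exact Nat.dvd_of_mod_eq_zero h
  · exact absurd hm' (hmin _ h (Nat.mod_lt _ hn))

/-- For a tower of A-extensions `F[z₁]...[z_l]` of a constant-stable difference field
`F` with `σ z_i = a_i · z_i`, `a_i ∈ K*` roots of unity, the constants are unchanged
iff each `a_i` is a primitive `λ_i`-th root of unity and the orders `λ_i` are pairwise
coprime. -/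
theorem stmt_10 (F E : Type*) [Field F] [CharZero F] [CommRing E]
    (σF : F ≃+* F) (σE : E ≃+* E) (ι : F →+* E)
    (hinj : Function.Injective ι)
    (hcomm : ∀ c : F, σE (ι c) = ι (σF c))
    (hcs : ∀ k : ℕ, 1 ≤ k → ∀ c : F, (⇑σF)^[k] c = c → σF c = c)
    (l : ℕ) (lam : Fin l → ℕ) (hlam : ∀ i, 1 < lam i)
    (z : Fin l → E) (a : Fin l → F)
    (haK : ∀ i, σF (a i) = a i ∧ a i ≠ 0 ∧ (a i) ^ (lam i) = 1)
    (hz : ∀ i, (z i) ^ (lam i) = 1) (hσz : ∀ i, σE (z i) = ι (a i) * z i)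
    (hbasis : ∀ f : E, ∃! c : (∀ i : Fin l, Fin (lam i)) → F,
      f = ∑ ν : (∀ i : Fin l, Fin (lam i)), ι (c ν) * ∏ i : Fin l, (z i) ^ ((ν i : ℕ))) :
    (∀ f : E, σE f = f → ∃ c : F, σF c = c ∧ f = ι c) ↔
      ((∀ i, ∀ j : ℕ, 1 ≤ j → j < lam i → (a i) ^ j ≠ 1) ∧
        ∀ i j, i ≠ j → Nat.Coprime (lam i) (lam j)) := by
  classical
  have hlam0 : ∀ i, 0 < lam i := fun i => lt_trans one_pos (hlam i)
  set M : (∀ i : Fin l, Fin (lam i)) → E := fun ν => ∏ i : Fin l, (z i) ^ ((ν i : ℕ))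
    with hMdef
  set A : (∀ i : Fin l, Fin (lam i)) → F := fun ν => ∏ i : Fin l, (a i) ^ ((ν i : ℕ))
    with hAdef
  have hbasis' : ∀ f : E, ∃! c : (∀ i : Fin l, Fin (lam i)) → F,
      f = ∑ ν : (∀ i : Fin l, Fin (lam i)), ι (c ν) * M ν := by
    simp only [hMdef]; exact hbasis
  set ν0 : ∀ i : Fin l, Fin (lam i) := fun i => ⟨0, hlam0 i⟩ with hν0def
  have hM0 : M ν0 = 1 := by simp [hMdef, hν0def]
  have huniq : ∀ c c' : (∀ i : Fin l, Fin (lam i)) → F,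
      (∑ ν : (∀ i : Fin l, Fin (lam i)), ι (c ν) * M ν) =
        (∑ ν : (∀ i : Fin l, Fin (lam i)), ι (c' ν) * M ν) → c = c' := by
    intro c c' h
    obtain ⟨c0, _, hu⟩ := hbasis' (∑ ν : (∀ i : Fin l, Fin (lam i)), ι (c ν) * M ν)
    exact (hu c rfl).trans (hu c' h).symm
  have hrep : ∀ (δ : ∀ i : Fin l, Fin (lam i)) (x : F),
      (∑ ν : (∀ i : Fin l, Fin (lam i)), ι (if ν = δ then x else 0) * M ν) = ι x * M δ := by
    intro δ x
    have := Finset.sum_eq_single_of_mem (s := (Finset.univ : Finset (∀ i : Fin l, Fin (lam i))))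
      (f := fun ν => ι (if ν = δ then x else 0) * M ν) δ (Finset.mem_univ δ)
      (fun ν _ hne => by simp [hne])
    rw [this]; simp
  have hmono : ∀ (δ : ∀ i : Fin l, Fin (lam i)) (x c : F), δ ≠ ν0 →
      ι x * M δ = ι c → x = 0 := by
    intro δ x c hδ h
    have heq : (fun ν => if ν = δ then x else 0) =
        (fun ν => if ν = ν0 then c else (0 : F)) := by
      apply huniq
      rw [hrep, hrep, hM0, mul_one, h]
    have h2 := congrFun heq δ
    simpa [hδ] using h2
  have hσM : ∀ ν : ∀ i : Fin l, Fin (lam i), σE (M ν) = ι (A ν) * M ν := by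
    intro ν
    simp only [hMdef, hAdef, map_prod, map_pow, hσz, mul_pow, Finset.prod_mul_distrib]
  constructor
  · intro hconst
    have hprim : ∀ i, ∀ j : ℕ, 1 ≤ j → j < lam i → (a i) ^ j ≠ 1 := by
      intro i j hj1 hjlt hji
      set δ : ∀ k : Fin l, Fin (lam k) := fun k =>
        if h : k = i then ⟨j, by rw [h]; exact hjlt⟩ else ⟨0, hlam0 k⟩ with hδdef
      have hMδ : M δ = z i ^ j := by
        simp only [hMdef]
        rw [Finset.prod_eq_single i]
        · simp [hδdef]
        · intro k _ hk; simp [hδdef, hk]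
        · intro h; exact absurd (Finset.mem_univ i) h
      have hσf : σE (z i ^ j) = z i ^ j := by
        rw [map_pow, hσz, mul_pow, ← map_pow, hji, map_one, one_mul]
      obtain ⟨c, _, hfc⟩ := hconst _ hσf
      have hδν0 : δ ≠ ν0 := by
        intro h
        have h2 := congrFun h i
        simp [hδdef, hν0def, Fin.ext_iff] at h2
        omega
      exact one_ne_zero (hmono δ 1 c hδν0 (by rw [map_one, one_mul, hMδ]; exact hfc))
    refine ⟨hprim, ?_⟩
    intro i j hij
    by_contra hg
    have hg1 : Nat.gcd (lam i) (lam j) ≠ 1 := hg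
    set g := Nat.gcd (lam i) (lam j) with hgdef
    have hg0 : 0 < g := Nat.gcd_pos_of_pos_left _ (hlam0 i)
    have hg2 : 2 ≤ g := by omega
    set p := lam i / g with hpdef
    have hpg : p * g = lam i := Nat.div_mul_cancel (Nat.gcd_dvd_left _ _)
    have hp1 : 1 ≤ p := by
      rcases Nat.eq_zero_or_pos p with h | h
      · rw [h, zero_mul] at hpg; have := hlam0 i; omega
      · exact h
    have hplt : p < lam i := by nlinarith
    have hainv : ((a i ^ p)⁻¹) ^ lam j = 1 := by
      have hgj : g ∣ lam j := Nat.gcd_dvd_right _ _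
      obtain ⟨m, hm⟩ := hgj
      have hplj : p * lam j = lam i * m := by rw [hm, ← hpg]; ring
      rw [inv_pow, ← pow_mul, hplj, pow_mul, (haK i).2.2, one_pow, inv_one]
    have hPj : IsPrimitiveRoot (a j) (lam j) :=
      ⟨(haK j).2.2, aux_dvd_of_pow_eq_one (hlam0 j) (haK j).2.2 (hprim j)⟩
    haveI : NeZero (lam j) := ⟨(hlam0 j).ne'⟩
    obtain ⟨q, hqlt, hq⟩ := hPj.eq_pow_of_pow_eq_one hainv
    have hpq : a i ^ p * a j ^ q = 1 := by
      rw [hq]; exact mul_inv_cancel₀ (pow_ne_zero _ (haK i).2.1)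
    set δ : ∀ k : Fin l, Fin (lam k) := fun k =>
      if h : k = i then ⟨p, by rw [h]; exact hplt⟩
      else if h' : k = j then ⟨q, by rw [h']; exact hqlt⟩ else ⟨0, hlam0 k⟩ with hδdef
    have hMδ : M δ = z i ^ p * z j ^ q := by
      simp only [hMdef]
      have hsub : (∏ k : Fin l, z k ^ ((δ k : ℕ))) =
          ∏ k ∈ ({i, j} : Finset (Fin l)), z k ^ ((δ k : ℕ)) := by
        refine (Finset.prod_subset (Finset.subset_univ _) ?_).symm
        intro k _ hk
        simp only [Finset.mem_insert, Finset.mem_singleton, not_or] at hk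
        simp [hδdef, hk.1, hk.2]
      rw [hsub, Finset.prod_pair hij]
      simp [hδdef, Ne.symm hij]
    have hσf : σE (z i ^ p * z j ^ q) = z i ^ p * z j ^ q := by
      rw [map_mul, map_pow, map_pow, hσz, hσz, mul_pow, mul_pow, ← map_pow, ← map_pow]
      calc ι (a i ^ p) * z i ^ p * (ι (a j ^ q) * z j ^ q)
          = ι (a i ^ p * a j ^ q) * (z i ^ p * z j ^ q) := by rw [map_mul]; ring
        _ = z i ^ p * z j ^ q := by rw [hpq, map_one, one_mul]
    obtain ⟨c, _, hfc⟩ := hconst _ hσf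
    have hδν0 : δ ≠ ν0 := by
      intro h
      have h2 := congrFun h i
      simp [hδdef, hν0def, Fin.ext_iff] at h2
      omega
    exact one_ne_zero (hmono δ 1 c hδν0 (by rw [map_one, one_mul, hMδ]; exact hfc))
  · rintro ⟨hprim, hcop⟩ f hf
    obtain ⟨c, hc, hu⟩ := hbasis' f
    have hkey : ∀ ν, σF (c ν) * A ν = c ν := by
      have h1 : f = ∑ ν : (∀ i : Fin l, Fin (lam i)), ι (σF (c ν) * A ν) * M ν := by
        conv_lhs => rw [← hf, hc, map_sum]
        refine Finset.sum_congr rfl fun ν _ => ?_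
        rw [map_mul, hcomm, hσM, map_mul]; ring
      exact congrFun (hu _ h1)
    have hAfix : ∀ ν, σF (A ν) = A ν := by
      intro ν
      simp only [hAdef, map_prod, map_pow]
      exact Finset.prod_congr rfl fun i _ => by rw [(haK i).1]
    have hAne : ∀ ν, A ν ≠ 0 := by
      intro ν
      simp only [hAdef]
      exact Finset.prod_ne_zero_iff.mpr fun i _ => pow_ne_zero _ (haK i).2.1
    set N := ∏ i : Fin l, lam i with hNdef
    have hN1 : 1 ≤ N := Finset.one_le_prod' fun i _ => hlam0 i
    have hApow : ∀ ν, A ν ^ N = 1 := by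
      intro ν
      simp only [hAdef]
      rw [← Finset.prod_pow]
      refine Finset.prod_eq_one fun i _ => ?_
      obtain ⟨m, hm⟩ := Finset.dvd_prod_of_mem lam (Finset.mem_univ i)
      have hm' : N = lam i * m := by rw [hNdef, hm]
      rw [← pow_mul, hm', show (ν i : ℕ) * (lam i * m) = lam i * ((ν i : ℕ) * m) by ring,
        pow_mul, (haK i).2.2, one_pow]
    have hcν : ∀ ν, σF (c ν) = c ν := by
      intro ν
      have hσc : σF (c ν) = c ν * (A ν)⁻¹ :=
        (eq_mul_inv_iff_mul_eq₀ (hAne ν)).mpr (hkey ν)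
      have hiter : ∀ k : ℕ, (⇑σF)^[k] (c ν) = c ν * ((A ν)⁻¹) ^ k := by
        intro k
        induction k with
        | zero => simp
        | succ k ih =>
          rw [Function.iterate_succ_apply', ih, map_mul, map_pow, map_inv₀, hAfix ν, hσc]
          ring
      apply hcs N hN1
      rw [hiter N, inv_pow, hApow, inv_one, mul_one]
    have hzero : ∀ ν, ν ≠ ν0 → c ν = 0 := by
      intro ν hν
      have hA1 : A ν ≠ 1 := by
        intro hA1
        obtain ⟨i, hi⟩ := Function.ne_iff.mp hν
        have hi' : (ν i : ℕ) ≠ 0 := by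
          intro h
          exact hi (by rw [hν0def]; exact Fin.ext h)
        simp only [hAdef] at hA1
        set Q := ∏ k ∈ Finset.univ.erase i, lam k with hQdef
        have h2 : ∏ k : Fin l, (a k ^ ((ν k : ℕ))) ^ Q = 1 := by
          rw [Finset.prod_pow, hA1, one_pow]
        rw [← Finset.mul_prod_erase _ _ (Finset.mem_univ i)] at h2
        have h3 : (∏ k ∈ Finset.univ.erase i, (a k ^ ((ν k : ℕ))) ^ Q) = 1 := by
          refine Finset.prod_eq_one fun k hk => ?_
          obtain ⟨m, hm⟩ := Finset.dvd_prod_of_mem lam hk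
          have hm' : Q = lam k * m := by rw [hQdef, hm]
          rw [← pow_mul, hm', show (ν k : ℕ) * (lam k * m) = lam k * ((ν k : ℕ) * m) by ring,
            pow_mul, (haK k).2.2, one_pow]
        rw [h3, mul_one, ← pow_mul] at h2
        have hdvd : lam i ∣ (ν i : ℕ) * Q :=
          aux_dvd_of_pow_eq_one (hlam0 i) (haK i).2.2 (hprim i) _ h2
        have hcopQ : Nat.Coprime (lam i) Q := by
          rw [hQdef]
          exact Nat.Coprime.prod_right fun k hk =>
            hcop i k (Ne.symm (Finset.mem_erase.mp hk).1)
        have hdvd' : lam i ∣ (ν i : ℕ) := hcopQ.dvd_of_dvd_mul_right hdvd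
        have hle := Nat.le_of_dvd (Nat.pos_of_ne_zero hi') hdvd'
        exact absurd hle (not_le.mpr (ν i).isLt)
      have h := hkey ν
      rw [hcν ν] at h
      by_contra hc0
      exact hA1 (mul_left_cancel₀ hc0 (h.trans (mul_one (c ν)).symm))
    refine ⟨c ν0, hcν ν0, ?_⟩
    rw [hc, Finset.sum_eq_single ν0]
    · rw [hM0, mul_one]
    · intro ν _ hν; rw [hzero ν hν, map_zero, zero_mul]
    · intro h; exact absurd (Finset.mem_univ ν0) h
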